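/- Let A be a real symmetric D×D matrix with χ distinct nonzero eigenvalues x_0,...,x_{χ−1} (with multiplicities m_i), satisfying A ≤ k·I for a positive integer k. For odd N ≥ 2χ−1, define the Hankel matrix B_N with entries (B_N)_{mn} = Tr(A^{m+n+1}) for 0 ≤ m,n ≤ (N−1)/2. Then B_N is positive semidefinite if and only if A is positive semidefinite. -/

import Mathlib

open Matrix Polynomial

private lemma conj_pow_aux {n : ℕ} (U M : Matrix (Fin n) (Fin n) ℝ)
    (h1 : U * Uᴴ = 1) (h2 : Uᴴ * U = 1) (j : ℕ) :
    (U * M * Uᴴ) ^ j = U * M ^ j * Uᴴ := by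
  induction j with
  | zero => rw [pow_zero, pow_zero, mul_one, h1]
  | succ j ih =>
    rw [pow_succ, ih, pow_succ]
    calc U * M ^ j * Uᴴ * (U * M * Uᴴ) = U * M ^ j * (Uᴴ * U) * M * Uᴴ := by
          noncomm_ring
      _ = U * (M ^ j * M) * Uᴴ := by rw [h2]; noncomm_ring

private lemma trace_pow_eq {D : ℕ} {A : Matrix (Fin D) (Fin D) ℝ} (hA : A.IsHermitian)
    (j : ℕ) : (A ^ j).trace = ∑ i, hA.eigenvalues i ^ j := by
  have hU1 := hA.eigenvectorUnitary.2.2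
  have hU2 := hA.eigenvectorUnitary.2.1
  rw [Matrix.star_eq_conjTranspose] at hU1 hU2
  have hd : (RCLike.ofReal ∘ hA.eigenvalues : Fin D → ℝ) = hA.eigenvalues := by
    funext i; simp
  conv_lhs => rw [hA.spectral_theorem, Unitary.conjStarAlgAut_apply, hd]
  rw [show star (hA.eigenvectorUnitary : Matrix (Fin D) (Fin D) ℝ)
      = (hA.eigenvectorUnitary : Matrix (Fin D) (Fin D) ℝ)ᴴ from rfl]
  rw [conj_pow_aux _ _ hU1 hU2, diagonal_pow, trace_mul_cycle, hU2, one_mul, trace_diagonal]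
  simp [Pi.pow_apply]

theorem stmt13 (D k χ N : ℕ) (hk : 0 < k)
    (A : Matrix (Fin D) (Fin D) ℝ) (hA : A.IsHermitian)
    (hχ : ((Finset.univ.image hA.eigenvalues).filter fun x => x ≠ 0).card = χ)
    (hAk : ((k : ℝ) • (1 : Matrix (Fin D) (Fin D) ℝ) - A).PosSemidef)
    (hN : Odd N) (hNχ : 2 * χ - 1 ≤ N) :
    (Matrix.of fun m n : Fin ((N - 1) / 2 + 1) =>
        (A ^ ((m : ℕ) + (n : ℕ) + 1)).trace).PosSemidef ↔ A.PosSemidef := by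
  set d := (N - 1) / 2 with hd
  set μ := hA.eigenvalues with hμ
  set B : Matrix (Fin (d + 1)) (Fin (d + 1)) ℝ :=
    Matrix.of fun m n : Fin (d + 1) => (A ^ ((m : ℕ) + (n : ℕ) + 1)).trace with hB
  have hBentry : ∀ m n : Fin (d + 1), B m n = ∑ i, μ i ^ ((m : ℕ) + (n : ℕ) + 1) := by
    intro m n; simpa [hB] using trace_pow_eq hA ((m : ℕ) + (n : ℕ) + 1)
  have hBherm : B.IsHermitian := by
    ext m n
    simp only [conjTranspose_apply, star_trivial, hBentry]
    rw [show (n : ℕ) + (m : ℕ) + 1 = (m : ℕ) + (n : ℕ) + 1 by omega]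
  -- key quadratic form computation
  have key : ∀ x : Fin (d + 1) → ℝ,
      star x ⬝ᵥ B *ᵥ x = ∑ i, μ i * (∑ m, x m * μ i ^ (m : ℕ)) ^ 2 := by
    intro x
    have swap3 : ∀ f : Fin (d + 1) → Fin (d + 1) → Fin D → ℝ,
        ∑ m, ∑ n, ∑ i, f m n i = ∑ i, ∑ m, ∑ n, f m n i :=
      fun f => (Finset.sum_congr rfl fun m _ => Finset.sum_comm).trans Finset.sum_comm
    simp only [dotProduct, mulVec, dotProduct, hBentry, star_trivial, Finset.mul_sum,
      Finset.sum_mul, pow_two]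
    rw [swap3 fun m n i => x m * (μ i ^ ((m : ℕ) + (n : ℕ) + 1) * x n)]
    refine Finset.sum_congr rfl fun i _ => Finset.sum_congr rfl fun m _ =>
      Finset.sum_congr rfl fun n _ => by ring
  constructor
  · -- B psd → A psd
    intro hBpsd
    by_contra hApsd
    have hex : ∃ i0, μ i0 < 0 := by
      by_contra h
      push_neg at h
      exact hApsd (hA.posSemidef_iff_eigenvalues_nonneg.mpr h)
    obtain ⟨i0, hi0⟩ := hex
    set S := ((Finset.univ.image hA.eigenvalues).filter fun x => x ≠ 0) with hS
    have hx0S : μ i0 ∈ S := by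
      simp [hS, hμ, hi0.ne]
      exact hi0.ne
    set p : ℝ[X] := ∏ y ∈ S.erase (μ i0), (X - C y) with hp
    have hpdeg : p.natDegree = χ - 1 := by
      rw [hp, natDegree_prod]
      · simp [Finset.card_erase_of_mem hx0S, hχ]
      · intro y _; exact X_sub_C_ne_zero y
    have hpdeg' : p.natDegree < d + 1 := by
      rw [hpdeg]
      obtain ⟨t, ht⟩ := hN
      omega
    set x : Fin (d + 1) → ℝ := fun m => p.coeff m with hx
    have heval : ∀ c : ℝ, ∑ m : Fin (d + 1), x m * c ^ (m : ℕ) = p.eval c := by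
      intro c
      rw [eval_eq_sum_range' hpdeg',
        ← Fin.sum_univ_eq_sum_range (fun m => p.coeff m * c ^ m)]
    have hzero : ∀ i, μ i ≠ 0 → μ i ≠ μ i0 → p.eval (μ i) = 0 := by
      intro i h1 h2
      rw [hp, eval_prod]
      refine Finset.prod_eq_zero (i := μ i) ?_ (by simp)
      simp [hS, hμ, h1, h2]
      exact ⟨h2, h1⟩
    have hne : p.eval (μ i0) ≠ 0 := by
      rw [hp, eval_prod]
      refine Finset.prod_ne_zero_iff.mpr fun y hy => ?_
      have : y ≠ μ i0 := (Finset.mem_erase.mp hy).1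
      intro hc
      simp only [eval_sub, eval_X, eval_C, sub_eq_zero] at hc
      exact this hc.symm
    have hlt : star x ⬝ᵥ B *ᵥ x < 0 := by
      rw [key x]
      have : ∑ i, μ i * (∑ m, x m * μ i ^ (m : ℕ)) ^ 2 <
          ∑ _i : Fin D, (0 : ℝ) := by
        apply Finset.sum_lt_sum
        · intro i _
          simp only [heval]
          rcases eq_or_ne (μ i) 0 with h | h
          · simp [h]
          rcases eq_or_ne (μ i) (μ i0) with h2 | h2
          · rw [h2]
            exact mul_nonpos_of_nonpos_of_nonneg hi0.le (sq_nonneg _)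
          · simp [hzero i h h2]
        · exact ⟨i0, Finset.mem_univ _, by
            simp only [heval]
            exact mul_neg_of_neg_of_pos hi0 (by positivity)⟩
      simpa using this
    exact absurd (hBpsd.dotProduct_mulVec_nonneg x) (not_le.mpr hlt)
  · -- A psd → B psd
    intro hApsd
    refine .of_dotProduct_mulVec_nonneg hBherm fun x => ?_
    rw [key x]
    exact Finset.sum_nonneg fun i _ =>
      mul_nonneg (hApsd.eigenvalues_nonneg i) (sq_nonneg _)
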